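/- arXiv:1802.02181 — 5 statements merged into one kernel-verified Lean document; each statement's English description precedes it below -/
import Mathlib

section
/- Let A be an n×n real matrix, Q ⊆ V = {1, …, n}, and α ∈ ℝ. Suppose x ∈ Δ and there exists an index i ∉ σ(x) with (Ax)ᵢ > xᵀ(A − αI_Q)x. Then x is not a KKT point of f_Q^α on Δ: there exist no λ ∈ ℝ and μ ∈ ℝⁿ with μⱼ ≥ 0 for all j such that 2[(A − αI_Q)x]ⱼ − λ + μⱼ = 0 for all j and Σⱼ xⱼμⱼ = 0. -/
open Matrix Finset

/-- The diagonal matrix `I_Q` with `(I_Q)ᵢᵢ = 1` for `i ∉ Q` and `0` for `i ∈ Q`. -/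
def IQmat (n : ℕ) (Q : Finset (Fin n)) : Matrix (Fin n) (Fin n) ℝ :=
  Matrix.diagonal (fun j => if j ∈ Q then 0 else 1)

/-- If `x ∈ Δ` and there is an index `i ∉ σ(x)` with
`(Ax)ᵢ > xᵀ(A − αI_Q)x`, then `x` is not a KKT point of `f_Q^α` on `Δ`:
no multipliers `λ ∈ ℝ`, `μ ≥ 0` satisfy the stationarity and complementarity
conditions. -/
theorem not_kkt_of_dominant_index
    (n : ℕ) (A : Matrix (Fin n) (Fin n) ℝ) (Q : Finset (Fin n)) (α : ℝ)
    (x : Fin n → ℝ) (hx : x ∈ stdSimplex ℝ (Fin n))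
    (i : Fin n) (hi : ¬ 0 < x i)
    (hgt : x ⬝ᵥ ((A - α • IQmat n Q) *ᵥ x) < (A *ᵥ x) i) :
    ¬ ∃ (lam : ℝ) (μ : Fin n → ℝ),
        (∀ j, 0 ≤ μ j) ∧
        (∀ j, 2 * (((A - α • IQmat n Q) *ᵥ x) j) - lam + μ j = 0) ∧
        ∑ j, x j * μ j = 0 := by
  rintro ⟨lam, μ, hμ, hst, hcomp⟩
  have hxi : x i = 0 := le_antisymm (not_lt.mp hi) (hx.1 i)
  have hBi : ((A - α • IQmat n Q) *ᵥ x) i = (A *ᵥ x) i := by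
    simp [Matrix.sub_mulVec, Matrix.smul_mulVec, IQmat, Matrix.mulVec_diagonal, hxi]
  set B := A - α • IQmat n Q with hB
  have hμeq : ∀ j, μ j = lam - 2 * (B *ᵥ x) j := fun j => by linarith [hst j]
  have hsum : ∑ j, x j * μ j = lam - 2 * (x ⬝ᵥ (B *ᵥ x)) := by
    simp only [hμeq, mul_sub, Finset.sum_sub_distrib, ← Finset.sum_mul]
    rw [show (∑ j, x j) = 1 from hx.2]
    simp [dotProduct, Finset.mul_sum]
    congr 1
    ext j
    ring
  have hlam : lam = 2 * (x ⬝ᵥ (B *ᵥ x)) := by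
    rw [hcomp] at hsum; linarith
  have := hst i
  rw [hBi] at this
  have hμi := hμ i
  nlinarith [hgt]
end

section
/- Let A be a symmetric n×n real matrix, Q ⊆ V = {1, …, n}, and α ∈ ℝ. Suppose x ∈ Δ and there exists an index i ∉ σ(x) with (Ax)ᵢ > xᵀ(A − αI_Q)x. Then x is not a local maximizer of f_Q^α over Δ: every neighborhood of x contains a point z ∈ Δ with f_Q^α(z) > f_Q^α(x). -/
open Matrix Finset Topology Filter

/-- Let `A` be symmetric. If `x ∈ Δ` and there is an index `i ∉ σ(x)` with
`(Ax)ᵢ > xᵀ(A − αI_Q)x`, then `x` is not a local maximizer of `f_Q^α` over `Δ`: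
every neighborhood of `x` contains a point `z ∈ Δ` with `f_Q^α(z) > f_Q^α(x)`. -/
theorem not_localMax_of_dominant_index
    (n : ℕ) (A : Matrix (Fin n) (Fin n) ℝ) (hA : A.IsSymm)
    (Q : Finset (Fin n)) (α : ℝ)
    (x : Fin n → ℝ) (hx : x ∈ stdSimplex ℝ (Fin n))
    (i : Fin n) (hi : ¬ 0 < x i)
    (hgt : x ⬝ᵥ ((A - α • IQmat n Q) *ᵥ x) < (A *ᵥ x) i) :
    ∀ U ∈ 𝓝 x, ∃ z ∈ U, z ∈ stdSimplex ℝ (Fin n) ∧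
      x ⬝ᵥ ((A - α • IQmat n Q) *ᵥ x) < z ⬝ᵥ ((A - α • IQmat n Q) *ᵥ z) := by
  intro U hU
  set B : Matrix (Fin n) (Fin n) ℝ := A - α • IQmat n Q with hB
  have hBsymm : Bᵀ = B := by
    simp [hB, IQmat, Matrix.transpose_sub, Matrix.transpose_smul, hA.eq,
      Matrix.diagonal_transpose]
  have hxi : x i = 0 := le_antisymm (not_lt.mp hi) (hx.1 i)
  set d : Fin n → ℝ := Pi.single i 1 - x with hd
  -- symmetry of the bilinear form
  have hsymm : ∀ v w : Fin n → ℝ, v ⬝ᵥ (B *ᵥ w) = w ⬝ᵥ (B *ᵥ v) := by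
    intro v w
    rw [Matrix.dotProduct_mulVec, ← Matrix.mulVec_transpose, hBsymm,
      dotProduct_comm]
  have hsingle : ∀ v : Fin n → ℝ, (Pi.single i 1 : Fin n → ℝ) ⬝ᵥ v = v i := by
    intro v
    simp [dotProduct, Pi.single_apply, ite_mul]
  have hBxi : (B *ᵥ x) i = (A *ᵥ x) i := by
    simp [hB, Matrix.sub_mulVec, Matrix.smul_mulVec, IQmat,
      Matrix.mulVec_diagonal, hxi]
  set c : ℝ := (A *ᵥ x) i - x ⬝ᵥ (B *ᵥ x) with hc
  have hcpos : 0 < c := by simp only [hc]; linarith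
  have hdBx : d ⬝ᵥ (B *ᵥ x) = c := by
    simp [hd, sub_dotProduct, hsingle, hBxi, hc]
  set q : ℝ := d ⬝ᵥ (B *ᵥ d) with hq
  have hexp : ∀ t : ℝ, (x + t • d) ⬝ᵥ (B *ᵥ (x + t • d))
      = x ⬝ᵥ (B *ᵥ x) + 2 * c * t + q * t ^ 2 := by
    intro t
    have h1 : x ⬝ᵥ (B *ᵥ d) = c := by rw [hsymm x d, hdBx]
    rw [Matrix.mulVec_add, Matrix.mulVec_smul, dotProduct_add,
      add_dotProduct, add_dotProduct, dotProduct_smul,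
      dotProduct_smul, smul_dotProduct, smul_dotProduct,
      h1, hdBx, ← hq, smul_eq_mul, smul_eq_mul, smul_eq_mul]
    ring
  -- choose a small positive t
  have htend : Tendsto (fun t : ℝ => x + t • d) (𝓝 0) (𝓝 x) := by
    have : Continuous (fun t : ℝ => x + t • d) := by continuity
    simpa using this.tendsto 0
  have hUe : ∀ᶠ t : ℝ in 𝓝 0, x + t • d ∈ U := htend.eventually hU
  have hqe : ∀ᶠ t : ℝ in 𝓝 0, 0 < 2 * c + q * t := by
    have h2 : Tendsto (fun t : ℝ => 2 * c + q * t) (𝓝 0) (𝓝 (2 * c)) := by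
      have : Continuous (fun t : ℝ => 2 * c + q * t) := by continuity
      simpa using this.tendsto 0
    exact h2.eventually (eventually_gt_nhds (by linarith))
  have h1e : ∀ᶠ t : ℝ in 𝓝 0, t < 1 := eventually_lt_nhds one_pos
  have hall : ∀ᶠ t : ℝ in 𝓝[>] (0:ℝ),
      (x + t • d ∈ U ∧ 0 < 2 * c + q * t ∧ t < 1) ∧ 0 < t := by
    refine (eventually_nhdsWithin_of_eventually_nhds
      ((hUe.and (hqe.and h1e)))).and ?_
    exact eventually_mem_nhdsWithin.mono (fun t ht => ht)
  obtain ⟨t, ⟨htU, htq, ht1⟩, htpos⟩ := hall.exists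
  refine ⟨x + t • d, htU, ⟨?_, ?_⟩, ?_⟩
  · intro j
    have hxj := hx.1 j
    simp only [hd, Pi.add_apply, Pi.smul_apply, Pi.sub_apply, smul_eq_mul]
    rcases eq_or_ne j i with rfl | hji
    · simp [hxi]
      positivity
    · simp [Pi.single_apply, hji]
      nlinarith
  · have hsum := hx.2
    simp only [hd, Pi.add_apply, Pi.smul_apply, Pi.sub_apply, smul_eq_mul]
    rw [Finset.sum_add_distrib]
    have : ∑ j, t * ((Pi.single i 1 : Fin n → ℝ) j - x j) = 0 := by
      rw [← Finset.mul_sum, Finset.sum_sub_distrib]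
      simp [Pi.single_apply, hsum]
    rw [hsum, this, add_zero]
  · rw [hexp t]
    nlinarith
end

section
/- Let B be a symmetric n×n real matrix and let x, y ∈ Δ satisfy (y − x)ᵀBx > 0. Define δ = 1 if (y − x)ᵀB(y − x) ≥ 0, and δ = min{ (x − y)ᵀBx / ((y − x)ᵀB(y − x)), 1 } otherwise. Then δ ∈ (0, 1], the point z = x + δ(y − x) lies in Δ, and zᵀBz > xᵀBx. -/
open Matrix Finset

/-- step-size rule of the infection–immunization dynamics.
If `B` is symmetric, `x, y ∈ Δ` and `(y − x)ᵀBx > 0`, with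
`δ = 1` when `(y − x)ᵀB(y − x) ≥ 0` and
`δ = min((x − y)ᵀBx / ((y − x)ᵀB(y − x)), 1)` otherwise,
then `δ ∈ (0,1]`, the point `z = x + δ(y − x)` lies in `Δ`, and `zᵀBz > xᵀBx`. -/
theorem infection_immunization_step
    (n : ℕ) (B : Matrix (Fin n) (Fin n) ℝ) (hB : B.IsSymm)
    (x y : Fin n → ℝ)
    (hx : x ∈ stdSimplex ℝ (Fin n)) (hy : y ∈ stdSimplex ℝ (Fin n))
    (hinf : 0 < (y - x) ⬝ᵥ (B *ᵥ x))
    (δ : ℝ)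
    (hδ : δ = if 0 ≤ (y - x) ⬝ᵥ (B *ᵥ (y - x)) then (1 : ℝ)
          else min (((x - y) ⬝ᵥ (B *ᵥ x)) / ((y - x) ⬝ᵥ (B *ᵥ (y - x)))) 1) :
    0 < δ ∧ δ ≤ 1 ∧ (x + δ • (y - x)) ∈ stdSimplex ℝ (Fin n) ∧
      x ⬝ᵥ (B *ᵥ x) < (x + δ • (y - x)) ⬝ᵥ (B *ᵥ (x + δ • (y - x))) := by
  set a := (y - x) ⬝ᵥ (B *ᵥ x) with ha
  set b := (y - x) ⬝ᵥ (B *ᵥ (y - x)) with hb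
  have hneg : (x - y) ⬝ᵥ (B *ᵥ x) = -a := by
    rw [ha, ← neg_sub y x, neg_dotProduct]
  -- symmetry
  have hsym : x ⬝ᵥ (B *ᵥ (y - x)) = a := by
    rw [ha, dotProduct_mulVec]
    conv_lhs => rw [← hB.eq, vecMul_transpose]
    rw [dotProduct_comm]
  -- δ bounds
  have hδ01 : 0 < δ ∧ δ ≤ 1 := by
    rw [hδ]
    split_ifs with h
    · exact ⟨one_pos, le_refl 1⟩
    · push_neg at h
      constructor
      · exact lt_min (by rw [hneg]; exact div_pos_of_neg_of_neg (by linarith) h) one_pos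
      · exact min_le_right _ _
  obtain ⟨hδ0, hδ1⟩ := hδ01
  -- quadratic increase
  have expand : (x + δ • (y - x)) ⬝ᵥ (B *ᵥ (x + δ • (y - x)))
      = x ⬝ᵥ (B *ᵥ x) + δ * (x ⬝ᵥ (B *ᵥ (y - x))) + δ * a + δ * δ * b := by
    rw [ha, hb]
    simp only [mulVec_add, mulVec_smul, dotProduct_add, add_dotProduct,
      smul_dotProduct, dotProduct_smul, smul_eq_mul]
    ring
  have hkey : 0 < 2 * δ * a + δ * δ * b := by
    rcases le_or_gt 0 b with hb0 | hb0
    · have : 0 < 2 * δ * a := by positivity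
      nlinarith
    · -- δ ≤ a / (-b), so δ * (-b) ≤ a, i.e. δ * b ≥ -a
      have hδle : δ ≤ a / (-b) := by
        rw [hδ, if_neg (not_le.mpr hb0), hneg]
        have : -a / b = a / (-b) := by rw [neg_div, div_neg]
        rw [this]
        exact min_le_left _ _
      have h1 : δ * (-b) ≤ a := (le_div_iff₀ (by linarith : (0:ℝ) < -b)).mp hδle
      nlinarith
  refine ⟨hδ0, hδ1, ?_, ?_⟩
  · constructor
    · intro i
      have h1 := hx.1 i
      have h2 := hy.1 i
      have : (x + δ • (y - x)) i = (1 - δ) * x i + δ * y i := by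
        show x i + δ * (y i - x i) = _
        ring
      rw [this]
      have : 0 ≤ (1 - δ) * x i := mul_nonneg (by linarith) h1
      nlinarith
    · have h1 := hx.2
      have h2 := hy.2
      simp only [Pi.add_apply, Pi.smul_apply, Pi.sub_apply, smul_eq_mul]
      rw [Finset.sum_add_distrib, ← Finset.mul_sum, Finset.sum_sub_distrib, h1, h2]
      ring
  · rw [expand, hsym]
    nlinarith
end

section
/- Let A be an n×n real matrix with aᵢⱼ = aⱼᵢ ≥ 0 for all i, j and aᵢᵢ = 0 for all i. If x ∈ Δ is a strict local maximizer of f(x) = xᵀAx over the standard simplex Δ and its support S = σ(x) satisfies the nondegeneracy condition w_{S∪{i}}(i) ≠ 0 for every i ∉ S, then S is a dominant set for A. -/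
open Matrix Finset Topology

/-- The recursive weight `w_S(i)` of the dominant-set framework:
`w_S(i) = 1` if `|S| = 1`, and
`w_S(i) = ∑_{j ∈ S∖{i}} (A j i − AWDeg_{S∖{i}}(j)) · w_{S∖{i}}(j)` otherwise,
where `AWDeg_T(j) = (1/|T|) ∑_{k ∈ T} A j k`. (Values for `i ∉ S` or `S = ∅` are
irrelevant and set to `1`.) -/
noncomputable def dsWeight {n : ℕ} (A : Matrix (Fin n) (Fin n) ℝ) :
    Finset (Fin n) → Fin n → ℝ := fun S i =>
  if h : 2 ≤ S.card ∧ i ∈ S then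
    ∑ j ∈ S.erase i,
      (A j i - (((S.erase i).card : ℝ))⁻¹ * ∑ k ∈ S.erase i, A j k) *
        dsWeight A (S.erase i) j
  else 1
termination_by S => S.card
decreasing_by exact Finset.card_erase_lt_of_mem h.2

/-- The total weight `W(S) = ∑_{i ∈ S} w_S(i)`. -/
noncomputable def dsTotalWeight {n : ℕ} (A : Matrix (Fin n) (Fin n) ℝ)
    (S : Finset (Fin n)) : ℝ :=
  ∑ i ∈ S, dsWeight A S i

/-- `S` is a dominant set: `S` is nonempty, `W(T) > 0` for every nonempty `T ⊆ S`,
`w_S(i) > 0` for all `i ∈ S`, and `w_{S∪{i}}(i) < 0` for all `i ∉ S`. -/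
def IsDominantSet {n : ℕ} (A : Matrix (Fin n) (Fin n) ℝ) (S : Finset (Fin n)) : Prop :=
  S.Nonempty ∧
  (∀ T ⊆ S, T.Nonempty → 0 < dsTotalWeight A T) ∧
  (∀ i ∈ S, 0 < dsWeight A S i) ∧
  (∀ i ∉ S, dsWeight A (insert i S) i < 0)

lemma det_updateRow_eq_sum {ι : Type*} [Fintype ι] [DecidableEq ι]
    (N : Matrix ι ι ℝ) (j : ι) (b : ι → ℝ) :
    (N.updateRow j b).det = ∑ r, adjugate N r j * b r := by
  have h0 : N.updateRow j b = (Nᵀ.updateCol j b)ᵀ := by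
    rw [← Matrix.updateRow_transpose, Matrix.transpose_transpose]
  have h1 : (N.updateRow j b).det = (Nᵀ.updateCol j b).det := by
    rw [h0, Matrix.det_transpose]
  rw [h1, ← Matrix.cramer_apply, Matrix.cramer_eq_adjugate_mulVec]
  rw [Matrix.mulVec]
  simp only [dotProduct]
  congr 1
  ext r
  rw [← Matrix.adjugate_transpose]
  rfl

namespace DSAux

variable {n : ℕ} (A : Matrix (Fin n) (Fin n) ℝ)

def bord (T : Finset (Fin n)) : Matrix ({x : Fin n // x ∈ T} ⊕ Unit) ({x : Fin n // x ∈ T} ⊕ Unit) ℝ :=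
  fun r c => match r, c with
  | Sum.inl j, Sum.inl k => A j.1 k.1
  | Sum.inl _, Sum.inr _ => 1
  | Sum.inr _, Sum.inl _ => 1
  | Sum.inr _, Sum.inr _ => 0

variable {T : Finset (Fin n)} {i : Fin n}

/-- the splitting equivalence -/
def spl (hi : i ∈ T) :
    ({x : Fin n // x ∈ T} ⊕ Unit) ≃ (({x : Fin n // x ∈ T.erase i} ⊕ Unit) ⊕ Unit) where
  toFun r := match r with
    | Sum.inl j => if h : j.1 = i then Sum.inr () else
        Sum.inl (Sum.inl ⟨j.1, Finset.mem_erase.2 ⟨h, j.2⟩⟩)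
    | Sum.inr _ => Sum.inl (Sum.inr ())
  invFun r := match r with
    | Sum.inl (Sum.inl j) => Sum.inl ⟨j.1, Finset.mem_of_mem_erase j.2⟩
    | Sum.inl (Sum.inr _) => Sum.inr ()
    | Sum.inr _ => Sum.inl ⟨i, hi⟩
  left_inv := by
    rintro (⟨j, hj⟩ | ⟨⟩)
    · by_cases h : j = i
      · subst h; simp
      · simp [h]
    · simp
  right_inv := by
    rintro ((⟨j, hj⟩ | ⟨⟩) | ⟨⟩)
    · have : j ≠ i := Finset.ne_of_mem_erase hj
      simp [this]
    · simp
    · simp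

lemma adj_step (hi : i ∈ T) :
    adjugate (bord A T) (Sum.inl ⟨i, hi⟩) (Sum.inr ()) =
      - Matrix.det ((bord A (T.erase i)).updateRow (Sum.inr ())
          (Sum.elim (fun k => A i k.1) (fun _ => 1))) := by
  classical
  set E := T.erase i with hE
  set b : ({x : Fin n // x ∈ E} ⊕ Unit) → ℝ := Sum.elim (fun k => A i k.1) (fun _ => 1) with hb
  set Rmat := (bord A E).updateRow (Sum.inr ()) b with hR
  set L := (bord A T).updateRow (Sum.inr ()) (Pi.single (Sum.inl ⟨i, hi⟩) 1) with hL
  have hLHS : adjugate (bord A T) (Sum.inl ⟨i, hi⟩) (Sum.inr ()) = L.det := adjugate_apply _ _ _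
  set e := spl (T := T) (i := i) hi with he
  set Lt := L.submatrix e.symm e.symm with hLt
  have h1 : Lt.det = L.det := Matrix.det_submatrix_equiv_self e.symm L
  set σ : Equiv.Perm (({x : Fin n // x ∈ E} ⊕ Unit) ⊕ Unit) :=
    Equiv.swap (Sum.inl (Sum.inr ())) (Sum.inr ()) with hσ
  set ycol : Matrix ({x : Fin n // x ∈ E} ⊕ Unit) Unit ℝ :=
    fun r _ => Sum.elim (fun j => A j.1 i) (fun _ => A i i) r with hy
  have h2 : Lt.submatrix σ id = Matrix.fromBlocks Rmat ycol 0 (Matrix.of fun _ _ => (1:ℝ)) := by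
    ext r c
    rcases r with (⟨j, hj⟩ | ⟨⟩) | ⟨⟩ <;> rcases c with (⟨k, hk⟩ | ⟨⟩) | ⟨⟩ <;>
    try simp [hLt, hσ, Equiv.swap_apply_def, he, spl, hL, hR, hb, hy, bord,
        Matrix.updateRow_apply, Pi.single_apply, Matrix.fromBlocks]
    all_goals simp_all [Finset.mem_erase]
  have h3 : (Lt.submatrix σ id).det = (Equiv.Perm.sign σ : ℝ) * Lt.det := by
    rw [Matrix.det_permute]
  have hsign : (Equiv.Perm.sign σ : ℤ) = -1 := by
    simp [hσ, Equiv.Perm.sign_swap (by simp : (Sum.inl (Sum.inr ()) : ({x : Fin n // x ∈ E} ⊕ Unit) ⊕ Unit) ≠ Sum.inr ())]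
  have h4 : (Matrix.fromBlocks Rmat ycol 0 (Matrix.of fun _ _ => (1:ℝ))).det = Rmat.det := by
    rw [Matrix.det_fromBlocks_zero₂₁]
    simp [Matrix.det_unique]
  rw [hLHS, ← h1]
  have := h2 ▸ h3
  rw [h4] at this
  have hs : (Equiv.Perm.sign σ : ℝ) = -1 := by exact_mod_cast hsign
  rw [hs] at this
  linarith [this]


lemma dsWeight_eq (S : Finset (Fin n)) (i : Fin n) :
    dsWeight A S i = if 2 ≤ S.card ∧ i ∈ S then
    ∑ j ∈ S.erase i,
      (A j i - (((S.erase i).card : ℝ))⁻¹ * ∑ k ∈ S.erase i, A j k) *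
        dsWeight A (S.erase i) j
  else 1 := by
  rw [dsWeight]
  split_ifs with h <;> simp [h]

lemma sum_bidx (T : Finset (Fin n)) (f : ({x : Fin n // x ∈ T} ⊕ Unit) → ℝ) :
    ∑ r, f r = (∑ j ∈ T.attach, f (Sum.inl j)) + f (Sum.inr ()) := by
  rw [Fintype.sum_sum_type]
  simp

lemma row_id (T : Finset (Fin n)) (k : Fin n) (hk : k ∈ T) :
    (∑ j ∈ T.attach, A k j.1 * adjugate (bord A T) (Sum.inl j) (Sum.inr ()))
      + adjugate (bord A T) (Sum.inr ()) (Sum.inr ()) = 0 := by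
  have h := congrFun (congrFun (Matrix.mul_adjugate (bord A T)) (Sum.inl ⟨k, hk⟩)) (Sum.inr ())
  rw [Matrix.mul_apply] at h
  rw [sum_bidx] at h
  simpa [bord] using h

lemma sum_id (T : Finset (Fin n)) :
    ∑ j ∈ T.attach, adjugate (bord A T) (Sum.inl j) (Sum.inr ()) = (bord A T).det := by
  have h := congrFun (congrFun (Matrix.mul_adjugate (bord A T)) (Sum.inr ())) (Sum.inr ())
  rw [Matrix.mul_apply] at h
  rw [sum_bidx] at h
  simpa [bord] using h



theorem key (hsymm : ∀ i j, A i j = A j i) (T : Finset (Fin n)) :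
    ∀ (i : Fin n) (hi : i ∈ T),
      dsWeight A T i = (-1 : ℝ)^T.card * adjugate (bord A T) (Sum.inl ⟨i, hi⟩) (Sum.inr ()) := by
  induction T using Finset.strongInduction with
  | _ T ih =>
  intro i hi
  by_cases h2 : 2 ≤ T.card
  · -- inductive step
    have hss : T.erase i ⊂ T := Finset.erase_ssubset hi
    have hEcard : (T.erase i).card = T.card - 1 := Finset.card_erase_of_mem hi
    have hEpos : 0 < (T.erase i).card := by omega
    have hEne : ((T.erase i).card : ℝ) ≠ 0 := Nat.cast_ne_zero.2 (by omega)
    set E := T.erase i with hE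
    set cv : ({x : Fin n // x ∈ E} ⊕ Unit) → ℝ :=
      fun r => adjugate (bord A E) r (Sum.inr ()) with hcv
    rw [dsWeight_eq, if_pos ⟨h2, hi⟩]
    rw [← Finset.sum_attach E (fun j => (A j i - ((E.card : ℝ))⁻¹ * ∑ k ∈ E, A j k) * dsWeight A E j)]
    have expand : ∀ j ∈ E.attach,
        (A j.1 i - ((E.card : ℝ))⁻¹ * ∑ k ∈ E, A j.1 k) * dsWeight A E j.1
        = (-1:ℝ)^E.card * (A i j.1 * cv (Sum.inl j))
          - (-1:ℝ)^E.card * (((E.card : ℝ))⁻¹ * ((∑ k ∈ E, A j.1 k) * cv (Sum.inl j))) := by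
      intro j hj
      rw [ih E hss j.1 j.2, hsymm j.1 i]
      ring
    rw [Finset.sum_congr rfl expand, Finset.sum_sub_distrib, ← Finset.mul_sum, ← Finset.mul_sum]
    have hS2 : ∑ j ∈ E.attach, ((E.card : ℝ))⁻¹ * ((∑ k ∈ E, A j.1 k) * cv (Sum.inl j))
        = -(cv (Sum.inr ())) := by
      rw [← Finset.mul_sum]
      have hsw : ∑ j ∈ E.attach, (∑ k ∈ E, A j.1 k) * cv (Sum.inl j)
          = ∑ k ∈ E, ∑ j ∈ E.attach, A j.1 k * cv (Sum.inl j) := by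
        simp_rw [Finset.sum_mul]
        exact Finset.sum_comm
      rw [hsw]
      have hin : ∀ k ∈ E, ∑ j ∈ E.attach, A j.1 k * cv (Sum.inl j)
          = -(cv (Sum.inr ())) := by
        intro k hk
        have h := row_id A E k hk
        have hsy : ∑ j ∈ E.attach, A j.1 k * cv (Sum.inl j)
            = ∑ j ∈ E.attach, A k j.1 * cv (Sum.inl j) := by
          apply Finset.sum_congr rfl
          intro j _
          rw [hsymm j.1 k]
        rw [hsy]
        have : ∑ j ∈ E.attach, A k j.1 * cv (Sum.inl j)
            = ∑ j ∈ E.attach, A k j.1 * adjugate (bord A E) (Sum.inl j) (Sum.inr ()) := rfl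
        rw [this]
        simp only [hcv]
        linarith [h]
      rw [Finset.sum_congr rfl hin, Finset.sum_const, nsmul_eq_mul]
      field_simp
    have hdet : ∑ j ∈ E.attach, A i j.1 * cv (Sum.inl j) + cv (Sum.inr ())
        = - adjugate (bord A T) (Sum.inl ⟨i, hi⟩) (Sum.inr ()) := by
      have h1 := det_updateRow_eq_sum (bord A E) (Sum.inr ())
        (Sum.elim (fun k : {x : Fin n // x ∈ E} => A i k.1) (fun _ => 1))
      rw [sum_bidx] at h1
      rw [adj_step A hi, neg_neg]
      rw [h1]
      simp only [hcv, Sum.elim_inl, Sum.elim_inr, mul_one]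
      congr 1
      apply Finset.sum_congr rfl
      intro j _
      ring
    rw [hS2]
    have hTc : T.card = E.card + 1 := by omega
    rw [hTc, pow_succ]
    linear_combination ((-1:ℝ)^E.card) * hdet
  · -- base case
    have hc1 : T.card = 1 := by
      have := Finset.card_pos.2 ⟨i, hi⟩
      omega
    rw [dsWeight_eq, if_neg (by omega)]
    rw [adj_step A hi]
    haveI hie : IsEmpty {x : Fin n // x ∈ T.erase i} := by
      constructor
      intro x
      have h0 : (T.erase i).card = 0 := by
        rw [Finset.card_erase_of_mem hi]; omega
      rw [Finset.card_eq_zero] at h0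
      rw [h0] at x
      exact absurd x.2 (Finset.notMem_empty _)
    haveI : Subsingleton ({x : Fin n // x ∈ T.erase i} ⊕ Unit) := by
      constructor
      rintro (a | ⟨⟩) (b | ⟨⟩)
      · exact (hie.false a).elim
      · exact (hie.false a).elim
      · exact (hie.false b).elim
      · rfl
    rw [Matrix.det_eq_elem_of_subsingleton _ (Sum.inr ())]
    rw [Matrix.updateRow_self]
    simp [hc1]


/-- total weight -/
noncomputable def Wt (T : Finset (Fin n)) : ℝ := ∑ j ∈ T, dsWeight A T j

/-- the constant value of `(A w_T)|_T` -/
noncomputable def muW (T : Finset (Fin n)) : ℝ :=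
  -((-1:ℝ)^T.card) * adjugate (bord A T) (Sum.inr ()) (Sum.inr ())

lemma constancy (hsymm : ∀ i j, A i j = A j i) (T : Finset (Fin n)) (k : Fin n) (hk : k ∈ T) :
    ∑ j ∈ T, A k j * dsWeight A T j = muW A T := by
  rw [← Finset.sum_attach T (fun j => A k j * dsWeight A T j)]
  have : ∀ j ∈ T.attach, A k j.1 * dsWeight A T j.1
      = (-1:ℝ)^T.card * (A k j.1 * adjugate (bord A T) (Sum.inl j) (Sum.inr ())) := by
    intro j _
    rw [key A hsymm T j.1 j.2]
    ring
  rw [Finset.sum_congr rfl this, ← Finset.mul_sum]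
  have h := row_id A T k hk
  rw [muW]
  linear_combination ((-1:ℝ)^T.card) * h

lemma wt_eq_det (hsymm : ∀ i j, A i j = A j i) (T : Finset (Fin n)) :
    Wt A T = (-1:ℝ)^T.card * (bord A T).det := by
  rw [Wt, ← Finset.sum_attach T (fun j => dsWeight A T j)]
  have : ∀ j ∈ T.attach, dsWeight A T j.1
      = (-1:ℝ)^T.card * adjugate (bord A T) (Sum.inl j) (Sum.inr ()) := by
    intro j _
    rw [key A hsymm T j.1 j.2]
  rw [Finset.sum_congr rfl this, ← Finset.mul_sum, sum_id]

lemma step_formula (hsymm : ∀ i j, A i j = A j i) (T : Finset (Fin n)) (i : Fin n)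
    (hi : i ∈ T) (h2 : 2 ≤ T.card) :
    dsWeight A T i = (∑ j ∈ T.erase i, A i j * dsWeight A (T.erase i) j) - muW A (T.erase i) := by
  have hEcard : (T.erase i).card = T.card - 1 := Finset.card_erase_of_mem hi
  have hEne : (((T.erase i).card : ℕ) : ℝ) ≠ 0 := Nat.cast_ne_zero.2 (by omega)
  set E := T.erase i with hE
  rw [dsWeight_eq, if_pos ⟨h2, hi⟩]
  have expand : ∀ j ∈ E, (A j i - ((E.card : ℝ))⁻¹ * ∑ k ∈ E, A j k) * dsWeight A E j
      = A i j * dsWeight A E j - ((E.card : ℝ))⁻¹ * ((∑ k ∈ E, A j k) * dsWeight A E j) := by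
    intro j _
    rw [hsymm j i]
    ring
  rw [Finset.sum_congr rfl expand, Finset.sum_sub_distrib, ← Finset.mul_sum]
  have hsw : ∑ j ∈ E, (∑ k ∈ E, A j k) * dsWeight A E j
      = ∑ k ∈ E, ∑ j ∈ E, A k j * dsWeight A E j := by
    simp_rw [Finset.sum_mul]
    rw [Finset.sum_comm]
    apply Finset.sum_congr rfl
    intro k _
    apply Finset.sum_congr rfl
    intro j _
    rw [hsymm j k]
  rw [hsw, Finset.sum_congr rfl (fun k hk => constancy A hsymm E k hk), Finset.sum_const,
    nsmul_eq_mul]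
  field_simp

/-- negative definiteness of `A` on the zero-sum vectors supported on `T` -/
def NegDefOn (T : Finset (Fin n)) : Prop :=
  ∀ y : Fin n → ℝ, (∀ k, k ∉ T → y k = 0) → (∑ k, y k) = 0 → y ≠ 0 →
    y ⬝ᵥ (A *ᵥ y) < 0

lemma negDefOn_mono {T U : Finset (Fin n)} (hTU : T ⊆ U) (h : NegDefOn A U) :
    NegDefOn A T := by
  intro y hsupp hsum hy
  exact h y (fun k hk => hsupp k (fun hkT => hk (hTU hkT))) hsum hy

lemma sum_supp_eq {T : Finset (Fin n)} (y : Fin n → ℝ) (hsupp : ∀ k, k ∉ T → y k = 0)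
    (f : Fin n → ℝ) : ∑ k, f k * y k = ∑ k ∈ T, f k * y k := by
  symm
  apply Finset.sum_subset (Finset.subset_univ T)
  intro x _ hx
  rw [hsupp x hx, mul_zero]

lemma det_bord_ne_zero (hsymm : ∀ i j, A i j = A j i) {T : Finset (Fin n)} (hT : T.Nonempty)
    (hnd : NegDefOn A T) : (bord A T).det ≠ 0 := by
  classical
  intro h0
  obtain ⟨v, hv, hv0⟩ := (Matrix.exists_mulVec_eq_zero_iff).2 h0
  set y : Fin n → ℝ := fun k => if h : k ∈ T then v (Sum.inl ⟨k, h⟩) else 0 with hy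
  set lam : ℝ := v (Sum.inr ()) with hlam
  have hsupp : ∀ k, k ∉ T → y k = 0 := by
    intro k hk
    simp [hy, hk]
  have hrow : ∀ j (hj : j ∈ T), (∑ k, A j k * y k) + lam = 0 := by
    intro j hj
    have h := congrFun hv0 (Sum.inl ⟨j, hj⟩)
    rw [Matrix.mulVec, dotProduct, sum_bidx] at h
    have hconv : ∑ k ∈ T.attach, bord A T (Sum.inl ⟨j, hj⟩) (Sum.inl k) * v (Sum.inl k)
        = ∑ k, A j k * y k := by
      rw [sum_supp_eq (T := T) y hsupp (A j), ← Finset.sum_attach T (fun k => A j k * y k)]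
      apply Finset.sum_congr rfl
      intro k _
      simp [bord, hy, k.2]
    rw [hconv] at h
    simpa [bord, hlam] using h
  have hsum : ∑ k, y k = 0 := by
    have h := congrFun hv0 (Sum.inr ())
    rw [Matrix.mulVec, dotProduct, sum_bidx] at h
    have hconv : ∑ k ∈ T.attach, bord A T (Sum.inr ()) (Sum.inl k) * v (Sum.inl k)
        = ∑ k, y k := by
      rw [show (∑ k, y k) = ∑ k, (1:ℝ) * y k by simp, sum_supp_eq (T := T) y hsupp (fun _ => (1:ℝ)),
        ← Finset.sum_attach T (fun k => (1:ℝ) * y k)]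
      apply Finset.sum_congr rfl
      intro k _
      simp [bord, hy, k.2]
    rw [hconv] at h
    simpa [bord] using h
  have hyAy : y ⬝ᵥ (A *ᵥ y) = 0 := by
    rw [dotProduct]
    have : ∀ k, y k * (A *ᵥ y) k = (A *ᵥ y) k * y k := fun k => mul_comm _ _
    simp_rw [this]
    rw [sum_supp_eq (T := T) y hsupp (fun k => (A *ᵥ y) k)]
    have : ∀ k ∈ T, (A *ᵥ y) k * y k = -lam * y k := by
      intro k hk
      have := hrow k hk
      rw [Matrix.mulVec, dotProduct]
      have h2 : ∑ j, A k j * y j = -lam := by linarith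
      rw [h2]
    rw [Finset.sum_congr rfl this, ← Finset.mul_sum]
    have : ∑ k ∈ T, y k = 0 := by
      rw [show (∑ k ∈ T, y k) = ∑ k ∈ T, (1:ℝ) * y k by simp]
      rw [← sum_supp_eq (T := T) y hsupp (fun _ => (1:ℝ))]
      simpa using hsum
    rw [this, mul_zero]
  have hy0 : y = 0 := by
    by_contra hyne
    exact absurd hyAy (ne_of_lt (hnd y hsupp hsum hyne))
  -- then lam = 0 and v = 0
  obtain ⟨j, hj⟩ := hT
  have hlam0 : lam = 0 := by
    have := hrow j hj
    have h2 : ∑ k, A j k * y k = 0 := by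
      rw [hy0]
      simp
    linarith
  apply hv
  ext r
  rcases r with ⟨k, hk⟩ | ⟨⟩
  · have := congrFun hy0 k
    simpa [hy, hk] using this
  · simpa [hlam] using hlam0


/-- `u` is the barycentric solution on `T` with value `lam` -/
def IsSol (T : Finset (Fin n)) (u : Fin n → ℝ) (lam : ℝ) : Prop :=
  (∀ k, k ∉ T → u k = 0) ∧ (∑ k, u k) = 1 ∧ ∀ k ∈ T, (A *ᵥ u) k = lam

lemma sum_eq_sum_T {T : Finset (Fin n)} (y : Fin n → ℝ) (hsupp : ∀ k, k ∉ T → y k = 0) :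
    ∑ k, y k = ∑ k ∈ T, y k := by
  symm
  apply Finset.sum_subset (Finset.subset_univ T)
  intro x _ hx
  exact hsupp x hx

lemma mulVec_supp {T : Finset (Fin n)} (y : Fin n → ℝ) (hsupp : ∀ k, k ∉ T → y k = 0)
    (k : Fin n) : (A *ᵥ y) k = ∑ j ∈ T, A k j * y j := by
  rw [Matrix.mulVec, dotProduct, sum_supp_eq (T := T) y hsupp (A k)]

lemma dotProduct_eq_sum_T {T : Finset (Fin n)} (y z : Fin n → ℝ)
    (hsupp : ∀ k, k ∉ T → y k = 0) : y ⬝ᵥ z = ∑ k ∈ T, y k * z k := by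
  rw [dotProduct]
  rw [show (∑ k, y k * z k) = ∑ k, z k * y k by simp [mul_comm]]
  rw [sum_supp_eq (T := T) y hsupp z]
  simp [mul_comm]

lemma sol_unique {T : Finset (Fin n)} (hnd : NegDefOn A T) {u v : Fin n → ℝ} {lu lv : ℝ}
    (hu : IsSol A T u lu) (hv : IsSol A T v lv) : u = v := by
  by_contra hne
  set d : Fin n → ℝ := u - v with hd
  have hdne : d ≠ 0 := by
    intro h
    exact hne (by ext k; have := congrFun h k; simpa [hd, sub_eq_zero] using this)
  have hdsupp : ∀ k, k ∉ T → d k = 0 := by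
    intro k hk
    simp [hd, hu.1 k hk, hv.1 k hk]
  have hdsum : ∑ k, d k = 0 := by
    simp [hd, Finset.sum_sub_distrib, hu.2.1, hv.2.1]
  have hAd : ∀ k ∈ T, (A *ᵥ d) k = lu - lv := by
    intro k hk
    have : A *ᵥ d = A *ᵥ u - A *ᵥ v := by
      rw [hd, Matrix.mulVec_sub]
    rw [this]
    simp [hu.2.2 k hk, hv.2.2 k hk]
  have hq : d ⬝ᵥ (A *ᵥ d) = 0 := by
    rw [dotProduct_eq_sum_T (T := T) d (A *ᵥ d) hdsupp]
    have : ∀ k ∈ T, d k * (A *ᵥ d) k = (lu - lv) * d k := by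
      intro k hk
      rw [hAd k hk]
      ring
    rw [Finset.sum_congr rfl this, ← Finset.mul_sum, ← sum_eq_sum_T d hdsupp, hdsum, mul_zero]
  exact absurd hq (ne_of_lt (hnd d hdsupp hdsum hdne))

lemma wt_ne_zero (hsymm : ∀ i j, A i j = A j i) {T : Finset (Fin n)} (hT : T.Nonempty)
    (hnd : NegDefOn A T) : Wt A T ≠ 0 := by
  rw [wt_eq_det A hsymm]
  exact mul_ne_zero (pow_ne_zero _ (by norm_num)) (det_bord_ne_zero A hsymm hT hnd)

/-- the normalized weight vector -/
noncomputable def uvec (T : Finset (Fin n)) : Fin n → ℝ :=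
  fun k => if k ∈ T then (Wt A T)⁻¹ * dsWeight A T k else 0

lemma uvec_sol (hsymm : ∀ i j, A i j = A j i) {T : Finset (Fin n)} (hT : T.Nonempty)
    (hnd : NegDefOn A T) : IsSol A T (uvec A T) (muW A T / Wt A T) := by
  have hW : Wt A T ≠ 0 := wt_ne_zero A hsymm hT hnd
  refine ⟨fun k hk => by simp [uvec, hk], ?_, ?_⟩
  · rw [sum_eq_sum_T (T := T) _ (fun k hk => by simp [uvec, hk])]
    have : ∀ k ∈ T, uvec A T k = (Wt A T)⁻¹ * dsWeight A T k := by
      intro k hk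
      simp [uvec, hk]
    rw [Finset.sum_congr rfl this, ← Finset.mul_sum, ← Wt, inv_mul_cancel₀ hW]
  · intro k hk
    rw [mulVec_supp A (T := T) _ (fun k hk => by simp [uvec, hk]) k]
    have : ∀ j ∈ T, A k j * uvec A T j = (Wt A T)⁻¹ * (A k j * dsWeight A T j) := by
      intro j hj
      simp only [uvec, if_pos hj]
      ring
    rw [Finset.sum_congr rfl this, ← Finset.mul_sum, constancy A hsymm T k hk]
    ring

lemma wpos (hsymm : ∀ i j, A i j = A j i) :
    ∀ T : Finset (Fin n), T.Nonempty → NegDefOn A T → 0 < Wt A T := by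
  intro T
  induction T using Finset.strongInduction with
  | _ T ih =>
  intro hT hnd
  by_cases h2 : 2 ≤ T.card
  · -- inductive step
    have hW : Wt A T ≠ 0 := wt_ne_zero A hsymm hT hnd
    set u := uvec A T with hu
    set lam := muW A T / Wt A T with hlam
    have husol : IsSol A T u lam := uvec_sol A hsymm hT hnd
    -- facts about each erase
    have herase : ∀ i ∈ T, (T.erase i).Nonempty ∧ NegDefOn A (T.erase i) := by
      intro i hi
      constructor
      · rw [← Finset.card_pos, Finset.card_erase_of_mem hi]
        omega
      · exact negDefOn_mono A (Finset.erase_subset i T) hnd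
    -- there is i in T with u ≠ uvec of erase
    have hexists : ∃ i ∈ T, u ≠ uvec A (T.erase i) := by
      by_contra hcon
      push_neg at hcon
      have : ∀ k, u k = 0 := by
        intro k
        by_cases hk : k ∈ T
        · have := hcon k hk
          rw [this]
          simp [uvec]
        · exact husol.1 k hk
      have : ∑ k, u k = 0 := by simp [this]
      rw [husol.2.1] at this
      norm_num at this
    obtain ⟨i, hi, hune⟩ := hexists
    set E := T.erase i with hE
    obtain ⟨hEne, hEnd⟩ := herase i hi
    have hWE : 0 < Wt A E := ih E (Finset.erase_ssubset hi) hEne hEnd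
    set v := uvec A E with hv
    set lamE := muW A E / Wt A E with hlamE
    have hvsol : IsSol A E v lamE := uvec_sol A hsymm hEne hEnd
    set g : ℝ := (A *ᵥ v) i - lamE with hg
    -- (a) dsWeight A T i = Wt A E * g
    have ha : dsWeight A T i = Wt A E * g := by
      rw [step_formula A hsymm T i hi h2]
      have h1 : ∑ j ∈ E, A i j * dsWeight A E j = Wt A E * (A *ᵥ v) i := by
        rw [mulVec_supp A v hvsol.1 i]
        rw [Finset.mul_sum]
        apply Finset.sum_congr rfl
        intro j hj
        simp only [hv, uvec, if_pos hj]
        field_simp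
      have h2' : muW A E = Wt A E * lamE := by
        rw [hlamE]
        field_simp
      rw [h1, h2', hg]
      ring
    -- (c) z = u - v is nonzero, zero-sum, supported in T
    set z : Fin n → ℝ := u - v with hz
    have hzsupp : ∀ k, k ∉ T → z k = 0 := by
      intro k hk
      have hkE : k ∉ E := fun h => hk (Finset.mem_of_mem_erase h)
      simp [hz, husol.1 k hk, hvsol.1 k hkE]
    have hzsum : ∑ k, z k = 0 := by
      simp [hz, Finset.sum_sub_distrib, husol.2.1, hvsol.2.1]
    have hzne : z ≠ 0 := by
      intro h
      apply hune
      ext k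
      have := congrFun h k
      simpa [hz, sub_eq_zero] using this
    have hzq : z ⬝ᵥ (A *ᵥ z) = -(g * u i) := by
      rw [dotProduct_eq_sum_T (T := T) z (A *ᵥ z) hzsupp]
      have hAz : ∀ k, (A *ᵥ z) k = (A *ᵥ u) k - (A *ᵥ v) k := by
        intro k
        rw [hz, Matrix.mulVec_sub]
        rfl
      have hterm : ∀ k ∈ T, z k * (A *ᵥ z) k
          = (lam - lamE) * z k - (if k = i then g * u i else 0) := by
        intro k hk
        rw [hAz k]
        by_cases hki : k = i
        · subst hki
          rw [if_pos rfl]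
          have h1 : (A *ᵥ u) k = lam := husol.2.2 k hk
          have h2' : z k = u k := by
            simp [hz, hvsol.1 k (Finset.notMem_erase k T)]
          rw [h1, h2']
          rw [hg]
          ring
        · rw [if_neg hki]
          have h1 : (A *ᵥ u) k = lam := husol.2.2 k hk
          have h2' : (A *ᵥ v) k = lamE := hvsol.2.2 k (Finset.mem_erase.2 ⟨hki, hk⟩)
          rw [h1, h2']
          ring
      rw [Finset.sum_congr rfl hterm, Finset.sum_sub_distrib, ← Finset.mul_sum,
        ← sum_eq_sum_T z hzsupp, hzsum, mul_zero, Finset.sum_ite_eq' T i (fun _ => g * u i),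
        if_pos hi]
      ring
    have hneg : z ⬝ᵥ (A *ᵥ z) < 0 := hnd z hzsupp hzsum hzne
    have hgu : 0 < g * u i := by linarith [hzq ▸ hneg]
    -- (d) dsWeight A T i = Wt A T * u i
    have hd : dsWeight A T i = Wt A T * u i := by
      simp only [hu, uvec, if_pos hi]
      field_simp
    have hui : u i ≠ 0 := by
      intro h
      rw [h, mul_zero] at hgu
      exact lt_irrefl 0 hgu
    have hWu : Wt A T * u i = Wt A E * g := by rw [← hd, ha]
    have hfinal : 0 < Wt A T * (u i * u i) := by
      have : Wt A T * (u i * u i) = Wt A E * (g * u i) := by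
        linear_combination u i * hWu
      rw [this]
      exact mul_pos hWE hgu
    nlinarith [hfinal, sq_nonneg (u i), hui]
  · -- base case : T is a singleton
    obtain ⟨i, hi⟩ := hT
    have hc1 : T.card = 1 := by
      have h1 : 1 ≤ T.card := Finset.card_pos.2 ⟨i, hi⟩
      omega
    obtain ⟨a, ha⟩ := Finset.card_eq_one.1 hc1
    rw [Wt, ha]
    rw [Finset.sum_singleton, dsWeight_eq, if_neg (by simp)]
    norm_num


lemma dot_symm (hsymm : ∀ i j, A i j = A j i) (x w : Fin n → ℝ) :
    x ⬝ᵥ (A *ᵥ w) = w ⬝ᵥ (A *ᵥ x) := by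
  simp only [dotProduct, Matrix.mulVec]
  calc ∑ i, x i * ∑ j, A i j * w j = ∑ i, ∑ j, x i * (A i j * w j) := by
        simp [Finset.mul_sum]
    _ = ∑ j, ∑ i, x i * (A i j * w j) := Finset.sum_comm
    _ = ∑ j, w j * ∑ i, A j i * x i := by
        apply Finset.sum_congr rfl
        intro j _
        rw [Finset.mul_sum]
        apply Finset.sum_congr rfl
        intro i _
        rw [hsymm j i]
        ring

lemma quad_expand (hsymm : ∀ i j, A i j = A j i) (x w : Fin n → ℝ) :
    (x + w) ⬝ᵥ (A *ᵥ (x + w))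
      = x ⬝ᵥ (A *ᵥ x) + 2 * (w ⬝ᵥ (A *ᵥ x)) + w ⬝ᵥ (A *ᵥ w) := by
  rw [Matrix.mulVec_add, dotProduct_add, add_dotProduct,
    add_dotProduct, dot_symm A hsymm x w]
  ring

lemma kkt_le (hsymm : ∀ i j, A i j = A j i) (x : Fin n → ℝ)
    (hx : x ∈ stdSimplex ℝ (Fin n)) {U : Set (Fin n → ℝ)} {ε : ℝ} (hε : 0 < ε)
    (hball : Metric.ball x ε ⊆ U)
    (hmax : ∀ z ∈ stdSimplex ℝ (Fin n) ∩ U, z ≠ x → z ⬝ᵥ (A *ᵥ z) < x ⬝ᵥ (A *ᵥ x))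
    {i j : Fin n} (hij : i ≠ j) (hj : 0 < x j) : (A *ᵥ x) i ≤ (A *ᵥ x) j := by
  by_contra hcon
  push_neg at hcon
  set d : ℝ := (A *ᵥ x) i - (A *ᵥ x) j with hd
  have hd0 : 0 < d := by simp [hd]; linarith
  set e : ℝ := A i i + A j j - 2 * A i j with he
  set t : ℝ := min (x j) (min (ε/2) (d / (|e| + 1))) with ht
  have habs : 0 ≤ |e| := abs_nonneg e
  have ht0 : 0 < t := by
    apply lt_min hj
    apply lt_min (by linarith)
    positivity
  have htj : t ≤ x j := min_le_left _ _
  have htε : t ≤ ε / 2 := le_trans (min_le_right _ _) (min_le_left _ _)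
  have htd : t * (|e| + 1) ≤ d := by
    have h1 : t ≤ d / (|e| + 1) := le_trans (min_le_right _ _) (min_le_right _ _)
    have h2 : (0:ℝ) < |e| + 1 := by linarith
    calc t * (|e| + 1) ≤ (d / (|e| + 1)) * (|e| + 1) := by nlinarith
      _ = d := by field_simp
  set w : Fin n → ℝ := fun k => t * ((if k = i then 1 else 0) - (if k = j then 1 else 0)) with hw
  have hwdot : ∀ c : Fin n → ℝ, w ⬝ᵥ c = t * (c i - c j) := by
    intro c
    simp only [dotProduct, hw]
    have : ∀ k, t * ((if k = i then 1 else 0) - (if k = j then 1 else 0)) * c k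
        = t * ((if k = i then c k else 0) - (if k = j then c k else 0)) := by
      intro k
      split_ifs <;> ring
    rw [Finset.sum_congr rfl (fun k _ => this k)]
    rw [← Finset.mul_sum, Finset.sum_sub_distrib, Finset.sum_ite_eq' Finset.univ i c,
      Finset.sum_ite_eq' Finset.univ j c]
    simp
  have hAw : ∀ k, (A *ᵥ w) k = t * (A k i - A k j) := by
    intro k
    rw [Matrix.mulVec, show (A k ⬝ᵥ w) = w ⬝ᵥ A k from dotProduct_comm _ _, hwdot]
  have hwAw : w ⬝ᵥ (A *ᵥ w) = t^2 * e := by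
    rw [hwdot (A *ᵥ w), hAw i, hAw j, he, hsymm j i]
    ring
  have hwAx : w ⬝ᵥ (A *ᵥ x) = t * d := by rw [hwdot (A *ᵥ x), hd]
  set z : Fin n → ℝ := x + w with hz
  have hzsimplex : z ∈ stdSimplex ℝ (Fin n) := by
    constructor
    · intro k
      simp only [hz, hw, Pi.add_apply]
      by_cases hki : k = i
      · subst hki
        rw [if_pos rfl, if_neg hij]
        have := hx.1 k
        nlinarith
      · rw [if_neg hki]
        by_cases hkj : k = j
        · subst hkj
          rw [if_pos rfl]
          simp
          linarith
        · rw [if_neg hkj]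
          have := hx.1 k
          simp
          linarith
    · have hsw : ∑ k, w k = 0 := by
        simp only [hw]
        rw [← Finset.mul_sum, Finset.sum_sub_distrib]
        simp
      rw [hz]
      simp only [Pi.add_apply]
      rw [Finset.sum_add_distrib, hx.2, hsw]
      norm_num
  have hzU : z ∈ U := by
    apply hball
    rw [Metric.mem_ball]
    rw [dist_pi_lt_iff hε]
    intro k
    rw [Real.dist_eq]
    simp only [hz, Pi.add_apply, add_sub_cancel_left]
    have : |w k| ≤ t := by
      simp only [hw]
      rw [abs_mul, abs_of_pos ht0]
      split_ifs <;> norm_num <;> linarith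
    linarith
  have hzne : z ≠ x := by
    intro h
    have := congrFun h j
    simp only [hz, Pi.add_apply, hw, if_neg (Ne.symm hij), if_pos rfl] at this
    norm_num at this
    linarith
  have hlt := hmax z ⟨hzsimplex, hzU⟩ hzne
  rw [hz, quad_expand A hsymm x w, hwAx, hwAw] at hlt
  nlinarith [mul_pos ht0 hd0, sq_nonneg t, mul_pos (mul_pos ht0 ht0) hd0,
    abs_le.1 (le_refl |e|), neg_abs_le e, mul_le_mul_of_nonneg_left (neg_abs_le e) (le_of_lt (mul_pos ht0 ht0))]


lemma negdef_of_strict (hsymm : ∀ i j, A i j = A j i) (x : Fin n → ℝ)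
    (hx : x ∈ stdSimplex ℝ (Fin n)) {U : Set (Fin n → ℝ)} {ε : ℝ} (hε : 0 < ε)
    (hball : Metric.ball x ε ⊆ U)
    (hmax : ∀ z ∈ stdSimplex ℝ (Fin n) ∩ U, z ≠ x → z ⬝ᵥ (A *ᵥ z) < x ⬝ᵥ (A *ᵥ x))
    (hconst : ∀ k, 0 < x k → (A *ᵥ x) k = x ⬝ᵥ (A *ᵥ x)) :
    NegDefOn A (Finset.univ.filter (fun i => 0 < x i)) := by
  classical
  set S := Finset.univ.filter (fun i => 0 < x i) with hS
  intro y hsupp hsum hyne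
  have hymem : ∀ k, k ∉ S → y k = 0 := hsupp
  obtain ⟨k₀, hk₀⟩ : ∃ k, y k ≠ 0 := by
    by_contra hc
    push_neg at hc
    exact hyne (funext hc)
  have hk₀S : k₀ ∈ S := by
    by_contra hc
    exact hk₀ (hsupp k₀ hc)
  have hSne : S.Nonempty := ⟨k₀, hk₀S⟩
  set B : ℝ := (∑ k, |y k|) + 1 with hB
  have hB0 : 0 < B := by
    have : 0 ≤ ∑ k, |y k| := Finset.sum_nonneg (fun k _ => abs_nonneg _)
    linarith
  have hyB : ∀ k, |y k| ≤ B - 1 := by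
    intro k
    have := Finset.single_le_sum (f := fun k => |y k|) (fun k _ => abs_nonneg _)
      (Finset.mem_univ k)
    simp only [hB]
    linarith
  set m : ℝ := S.inf' hSne (fun k => x k) with hm
  have hm0 : 0 < m := by
    rw [hm, Finset.lt_inf'_iff]
    intro k hk
    exact (Finset.mem_filter.1 hk).2
  have hmle : ∀ k ∈ S, m ≤ x k := fun k hk => Finset.inf'_le _ hk
  set t : ℝ := min (m / B) (ε / (2 * B)) with ht
  have ht0 : 0 < t := lt_min (by positivity) (by positivity)
  have htB : t * B ≤ min m (ε / 2) := by
    apply le_min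
    · calc t * B ≤ (m / B) * B := by nlinarith [min_le_left (m / B) (ε / (2*B))]
        _ = m := by field_simp
    · calc t * B ≤ (ε / (2*B)) * B := by nlinarith [min_le_right (m / B) (ε / (2*B))]
        _ = ε / 2 := by field_simp
  have hty : ∀ k, t * |y k| ≤ min m (ε / 2) := by
    intro k
    calc t * |y k| ≤ t * B := by nlinarith [hyB k]
      _ ≤ _ := htB
  set w : Fin n → ℝ := fun k => t * y k with hw
  set z : Fin n → ℝ := x + w with hz
  have hzsimplex : z ∈ stdSimplex ℝ (Fin n) := by
    constructor
    · intro k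
      simp only [hz, hw, Pi.add_apply]
      by_cases hk : k ∈ S
      · have h1 : m ≤ x k := hmle k hk
        have h2 : t * y k ≥ -(t * |y k|) := by
          have : y k ≥ -|y k| := neg_abs_le (y k)
          nlinarith
        have h3 : t * |y k| ≤ m := le_trans (hty k) (min_le_left _ _)
        linarith
      · rw [hsupp k hk]
        have := hx.1 k
        simpa using this
    · simp only [hz, hw, Pi.add_apply]
      rw [Finset.sum_add_distrib, hx.2, ← Finset.mul_sum, hsum]
      norm_num
  have hzU : z ∈ U := by
    apply hball
    rw [Metric.mem_ball, dist_pi_lt_iff hε]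
    intro k
    rw [Real.dist_eq]
    simp only [hz, Pi.add_apply, add_sub_cancel_left, hw]
    rw [abs_mul, abs_of_pos ht0]
    have := hty k
    have := min_le_right m (ε/2)
    linarith
  have hzne : z ≠ x := by
    intro h
    have := congrFun h k₀
    simp only [hz, hw, Pi.add_apply] at this
    have : t * y k₀ = 0 := by linarith
    rcases mul_eq_zero.1 this with h' | h'
    · exact absurd h' (ne_of_gt ht0)
    · exact hk₀ h'
  have hyAx : y ⬝ᵥ (A *ᵥ x) = 0 := by
    rw [dotProduct_eq_sum_T (T := S) y (A *ᵥ x) hsupp]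
    have : ∀ k ∈ S, y k * (A *ᵥ x) k = (x ⬝ᵥ (A *ᵥ x)) * y k := by
      intro k hk
      rw [hconst k (Finset.mem_filter.1 hk).2]
      ring
    rw [Finset.sum_congr rfl this, ← Finset.mul_sum, ← sum_eq_sum_T y hsupp, hsum, mul_zero]
  have hwAx : w ⬝ᵥ (A *ᵥ x) = 0 := by
    have : w ⬝ᵥ (A *ᵥ x) = t * (y ⬝ᵥ (A *ᵥ x)) := by
      simp only [hw, dotProduct, Finset.mul_sum]
      apply Finset.sum_congr rfl
      intro k _
      ring
    rw [this, hyAx, mul_zero]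
  have hwAw : w ⬝ᵥ (A *ᵥ w) = t^2 * (y ⬝ᵥ (A *ᵥ y)) := by
    have h1 : A *ᵥ w = fun k => t * (A *ᵥ y) k := by
      ext k
      simp only [hw, Matrix.mulVec, dotProduct, Finset.mul_sum]
      apply Finset.sum_congr rfl
      intro l _
      ring
    rw [h1]
    simp only [hw, dotProduct]
    rw [Finset.mul_sum]
    apply Finset.sum_congr rfl
    intro k _
    ring
  have hlt := hmax z ⟨hzsimplex, hzU⟩ hzne
  rw [hz, quad_expand A hsymm x w, hwAx, hwAw] at hlt
  nlinarith [sq_nonneg t, mul_pos ht0 ht0]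


end DSAux

/-- if `A` is symmetric, nonnegative, with zero diagonal, `x ∈ Δ` is a
strict local maximizer of `f(x) = xᵀAx` over the standard simplex, and its support
`S = σ(x)` satisfies the nondegeneracy condition `w_{S∪{i}}(i) ≠ 0` for every `i ∉ S`,
then `S` is a dominant set for `A`. -/
theorem strictLocalMax_support_isDominantSet
    (n : ℕ) (A : Matrix (Fin n) (Fin n) ℝ)
    (hsymm : ∀ i j, A i j = A j i) (hnn : ∀ i j, 0 ≤ A i j) (hdiag : ∀ i, A i i = 0)
    (x : Fin n → ℝ) (hx : x ∈ stdSimplex ℝ (Fin n))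
    (hstrict : ∃ U ∈ 𝓝 x, ∀ z ∈ stdSimplex ℝ (Fin n) ∩ U, z ≠ x →
      z ⬝ᵥ (A *ᵥ z) < x ⬝ᵥ (A *ᵥ x))
    (S : Finset (Fin n)) (hSsupp : S = Finset.univ.filter (fun i => 0 < x i))
    (hnondeg : ∀ i ∉ S, dsWeight A (insert i S) i ≠ 0) :
    IsDominantSet A S := by
  classical
  open DSAux in
  obtain ⟨U, hU, hmax⟩ := hstrict
  obtain ⟨ε, hε, hball⟩ := Metric.mem_nhds_iff.1 hU
  have hmemS : ∀ k, k ∈ S ↔ 0 < x k := by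
    intro k
    rw [hSsupp, Finset.mem_filter]
    simp
  have hxsupp : ∀ k, k ∉ S → x k = 0 := by
    intro k hk
    have h1 := hx.1 k
    have h2 : ¬ 0 < x k := fun h => hk ((hmemS k).2 h)
    by_contra hne
    exact h2 (lt_of_le_of_ne h1 (Ne.symm hne))
  have hSne : S.Nonempty := by
    by_contra hc
    rw [Finset.not_nonempty_iff_eq_empty] at hc
    have : ∀ k, x k = 0 := by
      intro k
      apply hxsupp
      rw [hc]
      exact Finset.notMem_empty k
    have hz : ∑ k, x k = 0 := by simp [this]
    rw [hx.2] at hz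
    norm_num at hz
  -- KKT first-order conditions
  have hle : ∀ i j, i ≠ j → 0 < x j → (A *ᵥ x) i ≤ (A *ᵥ x) j :=
    fun i j hij hj => DSAux.kkt_le A hsymm x hx hε hball hmax hij hj
  have hconst : ∀ k, 0 < x k → (A *ᵥ x) k = x ⬝ᵥ (A *ᵥ x) := by
    intro k hk
    have heq : ∀ l, 0 < x l → (A *ᵥ x) l = (A *ᵥ x) k := by
      intro l hl
      by_cases hlk : l = k
      · rw [hlk]
      · exact le_antisymm (hle l k hlk hk) (hle k l (Ne.symm hlk) hl)
    have : x ⬝ᵥ (A *ᵥ x) = ∑ l ∈ S, x l * (A *ᵥ x) l :=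
      DSAux.dotProduct_eq_sum_T (T := S) x (A *ᵥ x) hxsupp
    rw [this]
    have h2 : ∀ l ∈ S, x l * (A *ᵥ x) l = (A *ᵥ x) k * x l := by
      intro l hl
      rw [heq l ((hmemS l).1 hl)]
      ring
    rw [Finset.sum_congr rfl h2, ← Finset.mul_sum, ← DSAux.sum_eq_sum_T x hxsupp, hx.2, mul_one]
  -- negative definiteness on S and subsets
  have hndS : DSAux.NegDefOn A S := by
    rw [hSsupp]
    exact DSAux.negdef_of_strict A hsymm x hx hε hball hmax hconst
  -- x is the solution on S
  have hxsol : DSAux.IsSol A S x (x ⬝ᵥ (A *ᵥ x)) :=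
    ⟨hxsupp, hx.2, fun k hk => hconst k ((hmemS k).1 hk)⟩
  have husol := DSAux.uvec_sol A hsymm hSne hndS
  have hxu : x = DSAux.uvec A S := DSAux.sol_unique A hndS hxsol husol
  have hWS : 0 < DSAux.Wt A S := DSAux.wpos A hsymm S hSne hndS
  have hwx : ∀ i ∈ S, dsWeight A S i = DSAux.Wt A S * x i := by
    intro i hi
    have := congrFun hxu i
    rw [DSAux.uvec, if_pos hi] at this
    rw [this]
    field_simp
  refine ⟨hSne, ?_, ?_, ?_⟩
  · -- total weights of subsets positive
    intro T hTS hTne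
    have : dsTotalWeight A T = DSAux.Wt A T := rfl
    rw [this]
    exact DSAux.wpos A hsymm T hTne (DSAux.negDefOn_mono A hTS hndS)
  · -- weights on S positive
    intro i hi
    rw [hwx i hi]
    exact mul_pos hWS ((hmemS i).1 hi)
  · -- external weights negative
    intro i hi
    have hiT : i ∈ insert i S := Finset.mem_insert_self i S
    have hcard : 2 ≤ (insert i S).card := by
      rw [Finset.card_insert_of_notMem hi]
      have := Finset.card_pos.2 hSne
      omega
    have herase : (insert i S).erase i = S := Finset.erase_insert hi
    have hstep := DSAux.step_formula A hsymm (insert i S) i hiT hcard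
    rw [herase] at hstep
    have h1 : ∑ j ∈ S, A i j * dsWeight A S j = DSAux.Wt A S * (A *ᵥ x) i := by
      rw [DSAux.mulVec_supp A (T := S) x hxsupp i, Finset.mul_sum]
      apply Finset.sum_congr rfl
      intro j hj
      rw [hwx j hj]
      ring
    have h2 : DSAux.muW A S = DSAux.Wt A S * (x ⬝ᵥ (A *ᵥ x)) := by
      obtain ⟨k, hk⟩ := hSne
      rw [← DSAux.constancy A hsymm S k hk]
      have : ∀ j ∈ S, A k j * dsWeight A S j = DSAux.Wt A S * (A k j * x j) := by
        intro j hj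
        rw [hwx j hj]
        ring
      rw [Finset.sum_congr rfl this, ← Finset.mul_sum]
      congr 1
      rw [← DSAux.mulVec_supp A (T := S) x hxsupp k]
      exact hconst k ((hmemS k).1 hk)
    rw [h1, h2] at hstep
    have hAxle : (A *ᵥ x) i ≤ x ⬝ᵥ (A *ᵥ x) := by
      obtain ⟨k, hk⟩ := hSne
      have hik : i ≠ k := fun h => hi (h ▸ hk)
      calc (A *ᵥ x) i ≤ (A *ᵥ x) k := hle i k hik ((hmemS k).1 hk)
        _ = x ⬝ᵥ (A *ᵥ x) := hconst k ((hmemS k).1 hk)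
    have hle0 : dsWeight A (insert i S) i ≤ 0 := by
      rw [hstep]
      have : DSAux.Wt A S * (A *ᵥ x) i ≤ DSAux.Wt A S * (x ⬝ᵥ (A *ᵥ x)) :=
        mul_le_mul_of_nonneg_left hAxle (le_of_lt hWS)
      linarith
    exact lt_of_le_of_ne hle0 (hnondeg i hi)
end

section
/- Let A be a symmetric n×n real matrix with nonnegative entries and let x ∈ Δ satisfy xᵀAx > 0. Define the replicator iterate R(x) ∈ ℝⁿ by R(x)ᵢ = xᵢ (Ax)ᵢ / (xᵀAx). Then R(x) ∈ Δ and R(x)ᵀA R(x) ≥ xᵀAx, with equality if and only if R(x) = x. -/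
open Matrix Finset

private lemma amgm_le' (a b : ℝ) (ha : 0 < a) (hb : 0 < b) :
    3 * (a * b) ≤ a^2 * b^2 + a + b := by
  nlinarith [sq_nonneg (a*b - 1), sq_nonneg (a - b), sq_nonneg (a*b - a), sq_nonneg (a*b - b),
    sq_nonneg (a + b - 2), mul_pos ha hb, sq_nonneg (a - 1), sq_nonneg (b - 1),
    mul_pos (mul_pos ha hb) (mul_pos ha hb)]

private lemma amgm_eq' (a b : ℝ) (ha : 0 < a) (hb : 0 < b)
    (h : a^2 * b^2 + a + b = 3 * (a * b)) : a = 1 ∧ b = 1 := by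
  set t := Real.sqrt (a*b) with ht
  have htpos : 0 < t := Real.sqrt_pos.2 (mul_pos ha hb)
  have ht2 : t^2 = a*b := Real.sq_sqrt (mul_pos ha hb).le
  have hab : 2*t ≤ a + b := by
    nlinarith [sq_nonneg (Real.sqrt a - Real.sqrt b), Real.sq_sqrt ha.le, Real.sq_sqrt hb.le,
      Real.sqrt_mul_self ha.le, Real.sqrt_mul ha.le b]
  have h3 : t * (t-1)^2 * (t+2) ≤ 0 := by nlinarith
  have h2p : 0 < t * (t + 2) := by nlinarith
  have h4 : (t-1)^2 ≤ 0 := by nlinarith [mul_pos h2p (mul_pos h2p h2p), sq_nonneg (t-1)]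
  have ht1 : t = 1 := by nlinarith [sq_nonneg (t-1)]
  have hab1 : a * b = 1 := by nlinarith
  have hs : a + b = 2 := by nlinarith
  constructor <;> nlinarith [sq_nonneg (a-1), sq_nonneg (b-1)]

private lemma amgm_div' (a b : ℝ) (ha : 0 < a) (hb : 0 < b) : 3 ≤ a*b + 1/a + 1/b := by
  have h := amgm_le' a b ha hb
  have e : a*b + 1/a + 1/b - 3 = (a^2*b^2 + a + b - 3*(a*b))/(a*b) := by
    field_simp; ring
  have key : 0 ≤ (a^2*b^2 + a + b - 3*(a*b))/(a*b) :=
    div_nonneg (by linarith) (by positivity)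
  linarith [e ▸ key]

private lemma amgm_div_eq' (a b : ℝ) (ha : 0 < a) (hb : 0 < b)
    (h : a*b + 1/a + 1/b = 3) : a = 1 ∧ b = 1 := by
  have e : a*b + 1/a + 1/b - 3 = (a^2*b^2 + a + b - 3*(a*b))/(a*b) := by
    field_simp; ring
  rw [h] at e
  have : a^2*b^2 + a + b - 3*(a*b) = 0 := by
    field_simp at e; linarith
  exact amgm_eq' a b ha hb (by linarith)

private lemma pt_id' (ν gi gj V : ℝ) (hgi : 0 < gi) (hgj : 0 < gj) (hV : 0 < V) :
    ν*(gi*gj)/V + ν*V*(V/gi) + ν*V*(V/gj)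
      = ν*V*((gi/V)*(gj/V) + 1/(gi/V) + 1/(gj/V)) := by
  field_simp

private lemma pt_le' (ν gi gj V : ℝ) (hν : 0 ≤ ν) (hgi : 0 < gi) (hgj : 0 < gj) (hV : 0 < V) :
    3*V*ν ≤ ν*(gi*gj)/V + ν*V*(V/gi) + ν*V*(V/gj) := by
  rw [pt_id' ν gi gj V hgi hgj hV]
  have h := amgm_div' (gi/V) (gj/V) (by positivity) (by positivity)
  have := mul_le_mul_of_nonneg_left h (mul_nonneg hν hV.le)
  linarith [this]

private lemma pt_eq' (ν gi gj V : ℝ) (hν : 0 < ν) (hgi : 0 < gi) (hgj : 0 < gj) (hV : 0 < V)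
    (h : 3*V*ν = ν*(gi*gj)/V + ν*V*(V/gi) + ν*V*(V/gj)) : gi = V ∧ gj = V := by
  rw [pt_id' ν gi gj V hgi hgj hV] at h
  have hνV : ν*V ≠ 0 := by positivity
  have h3 : (gi/V)*(gj/V) + 1/(gi/V) + 1/(gj/V) = 3 := by
    have h' : ν*V*((gi/V)*(gj/V) + 1/(gi/V) + 1/(gj/V)) = ν*V*3 := by linarith
    field_simp at h' ⊢
    linarith [h']
  obtain ⟨h1, h2⟩ := amgm_div_eq' _ _ (by positivity) (by positivity) h3
  constructor
  · field_simp at h1; linarith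
  · field_simp at h2; linarith

set_option maxHeartbeats 1000000 in
/-- one step of the discrete replicator dynamics. If `A` is symmetric
with nonnegative entries, `x ∈ Δ` and `xᵀAx > 0`, then the replicator iterate
`R(x)ᵢ = xᵢ (Ax)ᵢ / (xᵀAx)` lies in `Δ` and satisfies `R(x)ᵀA R(x) ≥ xᵀAx`, with
equality iff `R(x) = x`. -/
theorem replicator_step_increases_objective
    (n : ℕ) (A : Matrix (Fin n) (Fin n) ℝ) (hsymm : A.IsSymm)
    (hnn : ∀ i j, 0 ≤ A i j)
    (x : Fin n → ℝ) (hx : x ∈ stdSimplex ℝ (Fin n))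
    (hpos : 0 < x ⬝ᵥ (A *ᵥ x))
    (R : Fin n → ℝ) (hR : R = fun i => x i * (A *ᵥ x) i / (x ⬝ᵥ (A *ᵥ x))) :
    R ∈ stdSimplex ℝ (Fin n) ∧
    x ⬝ᵥ (A *ᵥ x) ≤ R ⬝ᵥ (A *ᵥ R) ∧
    (R ⬝ᵥ (A *ᵥ R) = x ⬝ᵥ (A *ᵥ x) ↔ R = x) := by
  obtain ⟨hxnn, hxsum⟩ := hx
  set g : Fin n → ℝ := fun i => ∑ j, A i j * x j with hgdef
  have hg_eq : ∀ i, g i = ∑ j, A i j * x j := fun i => rfl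
  have hmv : A *ᵥ x = g := by
    funext i; simp [Matrix.mulVec, dotProduct, hgdef]
  have hgnn : ∀ i, 0 ≤ g i := fun i =>
    Finset.sum_nonneg fun j _ => mul_nonneg (hnn i j) (hxnn j)
  set V : ℝ := ∑ i, x i * g i with hVdef
  have hdot : x ⬝ᵥ (A *ᵥ x) = V := by rw [hmv]; rfl
  have hV : 0 < V := hdot ▸ hpos
  rw [hmv] at hR
  have hdotg : x ⬝ᵥ g = V := rfl
  rw [hdotg] at hR
  -- column sums via symmetry
  have hcol : ∀ j, ∑ i, A i j * x i = g j := by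
    intro j
    rw [hg_eq j]
    exact Finset.sum_congr rfl fun i _ => by rw [hsymm.apply j i]
  -- the auxiliary function u
  set u : Fin n → ℝ := fun i => if g i = 0 then 0 else V / g i with hudef
  have hgu : ∀ i, g i * u i = if g i = 0 then 0 else V := by
    intro i
    by_cases h0 : g i = 0
    · simp [hudef, h0]
    · simp [hudef, h0]; exact mul_div_cancel₀ V h0
  -- quadratic form equals V
  have hQ : ∑ i, ∑ j, A i j * x i * x j = V := by
    rw [hVdef]
    refine Finset.sum_congr rfl fun i _ => ?_
    rw [hg_eq i, Finset.mul_sum]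
    exact Finset.sum_congr rfl fun j _ => by ring
  -- pointwise functions
  set F : Fin n → Fin n → ℝ := fun i j => 3 * V * (A i j * x i * x j) with hFdef
  set G : Fin n → Fin n → ℝ := fun i j =>
    A i j * (x i * g i) * (x j * g j) / V + A i j * x i * x j * V * u i
      + A i j * x i * x j * V * u j with hGdef
  -- positivity of g on positive pairs
  have hgpos : ∀ i j, 0 < A i j * x i * x j → 0 < g i ∧ 0 < g j := by
    intro i j hνp
    have hxj : 0 < x j := by
      rcases (hxnn j).lt_or_eq with h | h
      · exact h
      · exfalso; rw [← h] at hνp; simp at hνp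
    have hxi : 0 < x i := by
      rcases (hxnn i).lt_or_eq with h | h
      · exact h
      · exfalso; rw [← h] at hνp; simp at hνp
    have hAij : 0 < A i j := by
      by_contra hc; push_neg at hc; nlinarith [mul_nonneg hxi.le hxj.le]
    constructor
    · have h1 : A i j * x j ≤ g i := by
        rw [hg_eq i]
        exact Finset.single_le_sum (fun k _ => mul_nonneg (hnn i k) (hxnn k)) (mem_univ j)
      exact lt_of_lt_of_le (mul_pos hAij hxj) h1
    · have h1 : A j i * x i ≤ g j := by
        rw [hg_eq j]
        exact Finset.single_le_sum (fun k _ => mul_nonneg (hnn j k) (hxnn k)) (mem_univ i)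
      have : 0 < A j i * x i := by rw [hsymm.apply i j]; exact mul_pos hAij hxi
      exact lt_of_lt_of_le this h1
  -- pointwise inequality
  have hFG : ∀ i j, F i j ≤ G i j := by
    intro i j
    have hνnn : 0 ≤ A i j * x i * x j :=
      mul_nonneg (mul_nonneg (hnn i j) (hxnn i)) (hxnn j)
    rcases hνnn.lt_or_eq with hνp | hν0
    · obtain ⟨hgi, hgj⟩ := hgpos i j hνp
      have hui : u i = V / g i := by simp [hudef, hgi.ne']
      have huj : u j = V / g j := by simp [hudef, hgj.ne']
      have key := pt_le' (A i j * x i * x j) (g i) (g j) V hνp.le hgi hgj hV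
      have e1 : A i j * (x i * g i) * (x j * g j) / V
          = A i j * x i * x j * (g i * g j) / V := by ring
      simp only [hFdef, hGdef, hui, huj, e1]
      linarith [key]
    · have e1 : A i j * (x i * g i) * (x j * g j)
          = A i j * x i * x j * (g i * g j) := by ring
      simp only [hFdef, hGdef, e1, ← hν0]
      simp
  -- sum of F
  have hFsum : ∑ i, ∑ j, F i j = 3 * V * V := by
    simp only [hFdef, ← Finset.mul_sum]
    rw [hQ]
  -- c and its bound
  set c : ℝ := ∑ i, x i * (g i * u i) with hcdef
  have hc_pt : ∀ i, x i * (g i * u i) ≤ x i * V := by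
    intro i
    apply mul_le_mul_of_nonneg_left _ (hxnn i)
    rw [hgu i]
    split <;> [exact hV.le; exact le_refl V]
  have hc_le : c ≤ V := by
    calc c ≤ ∑ i, x i * V := Finset.sum_le_sum fun i _ => hc_pt i
    _ = V := by rw [← Finset.sum_mul, hxsum, one_mul]
  -- sum of G
  set S2 : ℝ := ∑ i, ∑ j, A i j * (x i * g i) * (x j * g j) with hS2def
  have hGsum : ∑ i, ∑ j, G i j = S2 / V + V * c + V * c := by
    have split : ∀ i, ∑ j, G i j = (∑ j, A i j * (x i * g i) * (x j * g j)) / V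
        + (∑ j, A i j * x i * x j * V * u i) + (∑ j, A i j * x i * x j * V * u j) := by
      intro i
      simp only [hGdef]
      rw [Finset.sum_add_distrib, Finset.sum_add_distrib, Finset.sum_div]
    rw [Finset.sum_congr rfl fun i _ => split i]
    rw [Finset.sum_add_distrib, Finset.sum_add_distrib, ← Finset.sum_div]
    congr 1
    · congr 1
      -- second piece = V * c
      rw [hcdef, Finset.mul_sum]
      refine Finset.sum_congr rfl fun i _ => ?_
      have : ∑ j, A i j * x i * x j * V * u i = (x i * V * u i) * ∑ j, A i j * x j := by
        rw [Finset.mul_sum]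
        exact Finset.sum_congr rfl fun j _ => by ring
      rw [this, ← hg_eq i]
      ring
    · -- third piece = V * c
      rw [Finset.sum_comm]
      rw [hcdef, Finset.mul_sum]
      refine Finset.sum_congr rfl fun j _ => ?_
      have : ∑ i, A i j * x i * x j * V * u j = (x j * V * u j) * ∑ i, A i j * x i := by
        rw [Finset.mul_sum]
        exact Finset.sum_congr rfl fun i _ => by ring
      rw [this, hcol j]
      ring
  -- main inequality
  have hmain : 3 * V * V ≤ S2 / V + V * c + V * c := by
    rw [← hFsum, ← hGsum]
    exact Finset.sum_le_sum fun i _ => Finset.sum_le_sum fun j _ => hFG i j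
  have hS2ge : V * (V * V) ≤ S2 := by
    have h1 : V * V ≤ S2 / V := by nlinarith [hc_le, hmain]
    calc V * (V * V) = (V * V) * V := by ring
    _ ≤ (S2 / V) * V := by exact mul_le_mul_of_nonneg_right h1 hV.le
    _ = S2 := by field_simp
  -- value of the new quadratic form
  have hSR : R ⬝ᵥ (A *ᵥ R) = S2 / (V * V) := by
    have h1 : R ⬝ᵥ (A *ᵥ R) = ∑ i, ∑ j, R i * (A i j * R j) := by
      simp [dotProduct, Matrix.mulVec, Finset.mul_sum]
    rw [h1, hS2def]
    rw [Finset.sum_div]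
    refine Finset.sum_congr rfl fun i _ => ?_
    rw [Finset.sum_div]
    refine Finset.sum_congr rfl fun j _ => ?_
    rw [hR]
    field_simp
  have hVne : V ≠ 0 := hV.ne'
  refine ⟨?_, ?_, ?_⟩
  · -- stdSimplex
    constructor
    · intro i
      rw [hR]
      exact div_nonneg (mul_nonneg (hxnn i) (hgnn i)) hV.le
    · rw [hR]
      simp only
      rw [← Finset.sum_div, ← hVdef, div_self hVne]
  · -- inequality
    rw [hdot, hSR]
    rw [le_div_iff₀ (by positivity)]
    calc V * (V * V) ≤ S2 := hS2ge
    _ = S2 := rfl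
  · -- equality iff
    constructor
    · intro hEq
      rw [hSR, hdot] at hEq
      have hS2eq : S2 = V * (V * V) := by
        field_simp at hEq
        linarith [hEq]
      -- c = V
      have hdiv : S2 / V = V * V := by
        rw [hS2eq]
        field_simp
      have hceq : c = V := by
        have hle : V ≤ c := by nlinarith [hmain, hdiv, hV]
        exact le_antisymm hc_le hle
      -- sums of F and G are equal
      have hsum_eq : ∑ i, ∑ j, F i j = ∑ i, ∑ j, G i j := by
        rw [hFsum, hGsum, hdiv, hceq]
        ring
      -- pointwise F = G
      have houter := (Finset.sum_eq_sum_iff_of_le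
        (fun i (_ : i ∈ univ) => Finset.sum_le_sum fun j _ => hFG i j)).1 hsum_eq
      have hptEq : ∀ i j, F i j = G i j := by
        intro i j
        have hin := (Finset.sum_eq_sum_iff_of_le
          (fun j (_ : j ∈ univ) => hFG i j)).1 (houter i (mem_univ i))
        exact hin j (mem_univ j)
      -- pointwise c equality
      have hcsum : ∑ i, x i * (g i * u i) = ∑ i, x i * V := by
        rw [← hcdef, hceq, ← Finset.sum_mul, hxsum, one_mul]
      have hcPt : ∀ i, x i * (g i * u i) = x i * V := by
        intro i
        exact (Finset.sum_eq_sum_iff_of_le fun i _ => hc_pt i).1 hcsum i (mem_univ i)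
      -- conclude R = x
      funext i
      by_cases hxi0 : x i = 0
      · rw [hR]; simp [hxi0]
      · have hxi : 0 < x i := lt_of_le_of_ne (hxnn i) (Ne.symm hxi0)
        have hguV : g i * u i = V := mul_left_cancel₀ hxi0 (hcPt i)
        have hgi0 : g i ≠ 0 := by
          intro h0
          rw [h0, zero_mul] at hguV
          exact hVne hguV.symm
        have hgi : 0 < g i := lt_of_le_of_ne (hgnn i) (Ne.symm hgi0)
        have hex : ∃ j, 0 < A i j * x j := by
          by_contra hno
          push_neg at hno
          have : g i ≤ 0 := by
            rw [hg_eq i]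
            exact Finset.sum_nonpos fun j _ => hno j
          linarith
        obtain ⟨j, hj⟩ := hex
        have hνp : 0 < A i j * x i * x j := by
          have he : A i j * x j * x i = A i j * x i * x j := by ring
          rw [← he]
          exact mul_pos hj hxi
        obtain ⟨_, hgj⟩ := hgpos i j hνp
        have heq := hptEq i j
        have hui : u i = V / g i := by simp [hudef, hgi.ne']
        have huj : u j = V / g j := by simp [hudef, hgj.ne']
        have e1 : A i j * (x i * g i) * (x j * g j) / V
            = A i j * x i * x j * (g i * g j) / V := by ring
        simp only [hFdef, hGdef, hui, huj, e1] at heq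
        have hkey : 3 * V * (A i j * x i * x j)
            = (A i j * x i * x j) * (g i * g j) / V
              + (A i j * x i * x j) * V * (V / g i)
              + (A i j * x i * x j) * V * (V / g j) := by
          rw [heq]
        obtain ⟨hgiV, _⟩ := pt_eq' (A i j * x i * x j) (g i) (g j) V hνp hgi hgj hV hkey
        rw [hR]
        show x i * g i / V = x i
        rw [hgiV, mul_div_cancel_right₀ _ hVne]
    · intro h
      rw [h]
end
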